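/- Let k ∈ ℤ \ {0}, ξ, η ∈ ℝ, ν ∈ (0,1], β₀ > 2, and let φ(t,k,ξ,η) be the multiplier from the previous context. Then for all t ≥ 0, ⟨t⟩^{−2} φ(t,k,ξ,η) ≤ 3, where ⟨t⟩ = √(1+t²). -/

import Mathlib

/-- A continuous function with zero derivative on the interior of a convex set is
constant on the set. -/
lemma aux_const_of_deriv_zero {f : ℝ → ℝ} {s : Set ℝ} (hc : Convex ℝ s)
    (hcont : ContinuousOn f s) (hd : ∀ x ∈ interior s, HasDerivAt f 0 x) :
    ∀ x ∈ s, ∀ y ∈ s, f x = f y := by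
  have hdiff : DifferentiableOn ℝ f (interior s) :=
    fun x hx => ((hd x hx).differentiableAt).differentiableWithinAt
  have hmono : MonotoneOn f s := monotoneOn_of_deriv_nonneg hc hcont hdiff
    (fun x hx => by rw [(hd x hx).deriv])
  have hanti : AntitoneOn f s := antitoneOn_of_deriv_nonpos hc hcont hdiff
    (fun x hx => by rw [(hd x hx).deriv])
  intro x hx y hy
  rcases le_total x y with h | h
  · exact le_antisymm (hmono hx hy h) (hanti hx hy h)
  · exact le_antisymm (hanti hy hx h) (hmono hy hx h)

lemma aux_clamp_le {t aa L : ℝ} (ht : 0 ≤ t) (hL : 0 ≤ L) :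
    max 0 (min (t - aa) L) ≤ t + max 0 (min (-aa) L) := by
  rcases le_total (-aa) L with h | h
  · have h1 : min (-aa) L = -aa := min_eq_left h
    apply max_le
    · positivity
    · calc min (t - aa) L ≤ t - aa := min_le_left _ _
        _ ≤ t + max 0 (min (-aa) L) := by
          rw [h1]
          have := le_max_right (0:ℝ) (-aa)
          linarith
  · have h1 : min (-aa) L = L := min_eq_right h
    apply max_le
    · positivity
    · calc min (t - aa) L ≤ L := min_le_right _ _
        _ ≤ t + max 0 (min (-aa) L) := by
          rw [h1]
          have := le_max_right (0:ℝ) L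
          linarith

lemma aux_key {t aa L : ℝ} (ht : 0 ≤ t) (hL : 0 ≤ L) :
    1 + (max 0 (min (t - aa) L)) ^ 2 ≤
      3 * (1 + t ^ 2) * (1 + (max 0 (min (-aa) L)) ^ 2) := by
  set u := max 0 (min (t - aa) L) with hu
  set u0 := max 0 (min (-aa) L) with hu0
  have h1 : u ≤ t + u0 := aux_clamp_le ht hL
  have h2 : (0:ℝ) ≤ u := le_max_left _ _
  have h3 : (0:ℝ) ≤ u0 := le_max_left _ _
  nlinarith [sq_nonneg (t - u0), sq_nonneg (t * u0), sq_nonneg u, sq_nonneg u0]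

/-- For the Fourier multiplier `φ` of Lemma 2.1 (defined by `φ(0)=1`,
`φ' = (∂ₜp/p)·φ` on `[ξ/k, ξ/k + β₀ ν^{−1/3}]` and `φ' = 0` otherwise, with
`p(t) = k² + (ξ−kt)² + η²`), one has `⟨t⟩^{−2} φ(t) ≤ 3` for all `t ≥ 0`,
where `⟨t⟩ = √(1+t²)`, i.e. `φ(t)/(1+t²) ≤ 3`. -/
theorem multiplier_phi_growth_bound
    (k : ℤ) (hk : k ≠ 0) (ξ η ν β₀ : ℝ)
    (hν : 0 < ν) (hν1 : ν ≤ 1) (hβ₀ : 2 < β₀)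
    (φ : ℝ → ℝ) (hφc : Continuous φ) (hφ0 : φ 0 = 1)
    (hode : ∀ t ∈ Set.Ioo (ξ / (k : ℝ)) (ξ / (k : ℝ) + β₀ * ν ^ (-(1 : ℝ) / 3)),
      HasDerivAt φ
        (((-2 * (k : ℝ) * (ξ - k * t)) / ((k : ℝ) ^ 2 + (ξ - k * t) ^ 2 + η ^ 2)) * φ t) t)
    (hflat : ∀ t ∉ Set.Icc (ξ / (k : ℝ)) (ξ / (k : ℝ) + β₀ * ν ^ (-(1 : ℝ) / 3)),
      HasDerivAt φ 0 t) :
    ∀ t ≥ (0 : ℝ), (Real.sqrt (1 + t ^ 2)) ^ (-(2 : ℝ)) * φ t ≤ 3 := by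
  set a : ℝ := ξ / (k : ℝ) with ha
  set L : ℝ := β₀ * ν ^ (-(1 : ℝ) / 3) with hLdef
  set b : ℝ := a + L with hb
  set p : ℝ → ℝ := fun t => (k : ℝ) ^ 2 + (ξ - k * t) ^ 2 + η ^ 2 with hp
  have hkR : (k : ℝ) ≠ 0 := Int.cast_ne_zero.mpr hk
  have hk1 : (1 : ℝ) ≤ (k : ℝ) ^ 2 := by
    have : (1 : ℤ) ≤ k ^ 2 := by rcases lt_or_gt_of_ne hk with h | h <;> nlinarith
    exact_mod_cast this
  have hppos : ∀ t, 0 < p t := by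
    intro t
    have : (0:ℝ) < (k:ℝ)^2 := by positivity
    simp only [hp]; nlinarith [sq_nonneg (ξ - k * t), sq_nonneg η]
  have hLpos : 0 < L := by
    have : (0:ℝ) < ν ^ (-(1 : ℝ) / 3) := Real.rpow_pos_of_pos hν _
    have hb2 : (0:ℝ) < β₀ := by linarith
    positivity
  have hab : a ≤ b := by simp [hb]; linarith
  have hxi : ξ = (k : ℝ) * a := by rw [ha]; field_simp
  -- derivative of p
  have hpderiv : ∀ t, HasDerivAt p (-2 * (k:ℝ) * (ξ - k * t)) t := by
    intro t
    have h1 : HasDerivAt (fun t : ℝ => ξ - (k:ℝ) * t) (-(k:ℝ)) t := by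
      simpa using ((hasDerivAt_id t).const_mul (k:ℝ)).const_sub ξ
    have h2 : HasDerivAt (fun t : ℝ => (ξ - (k:ℝ) * t) ^ 2)
        (2 * (ξ - (k:ℝ) * t) ^ 1 * (-(k:ℝ))) t := h1.pow 2
    have h3 := (h2.const_add ((k:ℝ)^2)).add_const (η^2)
    refine h3.congr_deriv ?_
    ring
  -- φ is constant on Iic a
  have hleft : ∀ s ∈ Set.Iic a, φ s = φ a := by
    intro s hs
    have := aux_const_of_deriv_zero (f := φ) (s := Set.Iic a) (convex_Iic a)
      hφc.continuousOn ?_ s hs a (Set.mem_Iic.mpr le_rfl)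
    · exact this
    · intro x hx
      rw [interior_Iic] at hx
      exact hflat x (by intro hc; exact absurd hc.1 (not_le.mpr hx))
  -- φ is constant on Ici b
  have hright : ∀ s ∈ Set.Ici b, φ s = φ b := by
    intro s hs
    have := aux_const_of_deriv_zero (f := φ) (s := Set.Ici b) (convex_Ici b)
      hφc.continuousOn ?_ s hs b (Set.mem_Ici.mpr le_rfl)
    · exact this
    · intro x hx
      rw [interior_Ici] at hx
      exact hflat x (by intro hc; exact absurd hc.2 (not_le.mpr hx))
  -- φ/p is constant on Icc a b
  have hmid : ∀ s ∈ Set.Icc a b, φ s / p s = φ a / p a := by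
    intro s hs
    have hcont : ContinuousOn (fun t => φ t / p t) (Set.Icc a b) := by
      apply ContinuousOn.div hφc.continuousOn
      · exact Continuous.continuousOn (by simp only [hp]; fun_prop)
      · exact fun t _ => (hppos t).ne'
    have hderiv : ∀ x ∈ interior (Set.Icc a b), HasDerivAt (fun t => φ t / p t) 0 x := by
      intro x hx
      rw [interior_Icc] at hx
      have hφ' := hode x hx
      have hd := hφ'.div (hpderiv x) (hppos x).ne'
      refine hd.congr_deriv ?_
      have hpx := (hppos x).ne'
      field_simp
      ring
    exact aux_const_of_deriv_zero (convex_Icc a b) hcont hderiv s hs a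
      (Set.left_mem_Icc.mpr hab)
  -- explicit formula: φ t = (φ a / p a) * p (clamp t)
  have hformula : ∀ t, φ t = (φ a / p a) * p (max a (min t b)) := by
    intro t
    rcases le_total t a with h | h
    · have hc : max a (min t b) = a := by
        rw [min_eq_left (le_trans h hab), max_eq_left h]
      rw [hc, hleft t h]
      have := hmid a (Set.left_mem_Icc.mpr hab)
      field_simp [(hppos a).ne']
    · rcases le_total t b with h2 | h2
      · have hc : max a (min t b) = t := by rw [min_eq_left h2, max_eq_right h]
        rw [hc]
        have := hmid t ⟨h, h2⟩
        have hpt := (hppos t).ne'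
        field_simp at this ⊢
        linarith [this]
      · have hc : max a (min t b) = b := by rw [min_eq_right h2, max_eq_right hab]
        rw [hc, hright t h2]
        have := hmid b (Set.right_mem_Icc.mpr hab)
        have hpb := (hppos b).ne'
        field_simp at this ⊢
        linarith [this]
  -- value of the constant
  have hC : φ a / p a = (p (max a (min 0 b)))⁻¹ := by
    have h0 := hformula 0
    rw [hφ0] at h0
    have := (hppos (max a (min 0 b))).ne'
    field_simp at h0 ⊢
    linarith [h0]
  intro t ht
  -- rewrite the weight
  have hsq : Real.sqrt (1 + t ^ 2) ^ (-(2:ℝ)) = (1 + t ^ 2)⁻¹ := by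
    rw [Real.rpow_neg (Real.sqrt_nonneg _)]
    congr 1
    rw [show ((2:ℝ) = ((2:ℕ):ℝ)) by norm_num, Real.rpow_natCast]
    exact Real.sq_sqrt (by positivity)
  rw [hsq, hformula t, hC]
  -- now bound p (clamp t) ≤ 3 (1+t²) p (clamp 0)
  set ct := max a (min t b) with hct
  set c0 := max a (min 0 b) with hc0
  have hclamp : ∀ s : ℝ, max a (min s b) - a = max 0 (min (s - a) L) := by
    intro s
    rcases le_total s a with h | h
    · rw [min_eq_left (le_trans h hab), max_eq_left h,
        min_eq_left (by linarith), max_eq_left (by linarith)]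
      ring
    · rcases le_total s b with h2 | h2
      · rw [min_eq_left h2, max_eq_right h, min_eq_left (by simp [hb] at h2; linarith),
          max_eq_right (by linarith)]
      · rw [min_eq_right h2, max_eq_right hab, min_eq_right (by simp [hb] at h2; linarith),
          max_eq_right (by linarith)]
        simp [hb]
  have hpc : ∀ s : ℝ, p (max a (min s b)) =
      (k:ℝ)^2 * (1 + (max a (min s b) - a)^2) + η^2 := by
    intro s
    simp only [hp, hxi]
    ring
  have hkey : p ct ≤ 3 * (1 + t ^ 2) * p c0 := by
    rw [hct, hc0, hpc t, hpc 0, hclamp t, hclamp 0]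
    have h0a : (0:ℝ) - a = -a := by ring
    rw [h0a]
    have hk2 : (0:ℝ) < (k:ℝ)^2 := by positivity
    have hkci := aux_key (aa := a) (L := L) ht hLpos.le
    nlinarith [sq_nonneg η, sq_nonneg t, sq_nonneg (max 0 (min (-a) L))]
  have hpc0 : 0 < p c0 := hppos c0
  rw [inv_mul_le_iff₀ (by positivity), mul_comm ((p c0)⁻¹) (p ct),
    mul_inv_le_iff₀ hpc0, mul_comm _ (p c0)]
  calc p ct ≤ 3 * (1 + t^2) * p c0 := hkey
    _ = p c0 * ((1 + t^2) * 3) := by ring
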